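/- Lemma 8 (Hankel sampling concentration). There exist universal constants c₄, c₅ > 0 such that the following holds. Let n_s, r ≥ 1, n = 2n_s − 1, let m ≥ c₅·log n, and let a₁, …, a_m be i.i.d. random indices, each uniform on {0,…,n−1}. Then for all fixed A, B, C, D ∈ ℂ^{n_s×r}, with probability at least 1 − n⁻², | (n/m)·Σ_{k=1}^{m} ⟨A·Bᵀ, H_{a_k}⟩·⟨H_{a_k}, C·Dᵀ⟩ − Σ_{a=0}^{n−1} ⟨A·Bᵀ, H_a⟩·⟨H_a, C·Dᵀ⟩ | ≤ c₄·√(n²·log(n)/m) · min(‖A‖_F‖B‖_{2,∞}, ‖A‖_{2,∞}‖B‖_F) · min(‖C‖_F‖D‖_{2,∞}, ‖C‖_{2,∞}‖D‖_F). (The left-hand side equals |⟨𝒢(p⁻¹P_Ω̂ − I)𝒢*(ABᵀ), CDᵀ⟩| in the sampling-with-replacement model with p = m/n.) -/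

import Mathlib

open Matrix
open scoped BigOperators Classical

set_option maxHeartbeats 2000000

noncomputable section

/-- Frobenius norm of a complex matrix. -/
def frobNorm {m n : ℕ} (A : Matrix (Fin m) (Fin n) ℂ) : ℝ :=
  Real.sqrt (∑ i, ∑ j, ‖A i j‖ ^ 2)

/-- Euclidean (ℓ₂) norm of a complex vector. -/
def vecNorm {n : ℕ} (v : Fin n → ℂ) : ℝ :=
  Real.sqrt (∑ i, ‖v i‖ ^ 2)

/-- `‖A‖_{2,∞}`: the largest ℓ₂ norm of the rows of `A`. -/
def norm2inf {m n : ℕ} (A : Matrix (Fin m) (Fin n) ℂ) : ℝ :=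
  ⨆ i, vecNorm (A i)

/-- `w_a`: the length of the `a`-th skew diagonal of an `n_s × n_s` matrix. -/
def hw (ns : ℕ) (a : ℕ) : ℕ :=
  (Finset.univ.filter (fun p : Fin ns × Fin ns => (p.1 : ℕ) + (p.2 : ℕ) = a)).card

/-- The Hankel basis matrix `H_a`. -/
def hankelBasis (ns : ℕ) (a : ℕ) : Matrix (Fin ns) (Fin ns) ℂ :=
  fun i j => if (i : ℕ) + (j : ℕ) = a then ((1 / Real.sqrt (hw ns a) : ℝ) : ℂ) else 0

/-- The matrix inner product `⟨X, Y⟩ = tr(XᴴY)`. -/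
def innerM {m n : ℕ} (X Y : Matrix (Fin m) (Fin n) ℂ) : ℂ :=
  Matrix.trace (Xᴴ * Y)

/-- `e^x ≤ 1 + x + x²` for `|x| ≤ 1`. -/
lemma exp_le_quad {x : ℝ} (hx : |x| ≤ 1) : Real.exp x ≤ 1 + x + x ^ 2 := by
  have h := Real.exp_bound hx (n := 2) (by norm_num)
  have h2 : ∑ m ∈ Finset.range 2, x ^ m / m.factorial = 1 + x := by
    simp [Finset.sum_range_succ]
  rw [h2] at h
  norm_num [Nat.factorial] at h
  have h' := abs_le.1 h
  nlinarith [sq_abs x, sq_nonneg x]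

/-- Combinatorial one-sided Chernoff bound over the finite uniform space `Fin m → Fin n`. -/
lemma chernoff_count (n m : ℕ) (hm : 0 < m) (g : Fin n → ℝ) (B : ℝ) (hB : 0 < B)
    (hg : ∀ a, |g a| ≤ B) (hsum : ∑ a, g a = 0) (s : ℝ) (hs : 0 ≤ s) (hsB : s ≤ 2 * m * B) :
    ((Finset.univ.filter (fun ω : Fin m → Fin n => s ≤ ∑ k, g (ω k))).card : ℝ)
      ≤ (n : ℝ) ^ m * Real.exp (-s ^ 2 / (4 * m * B ^ 2)) := by
  set L : ℝ := s / (2 * m * B ^ 2) with hL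
  have hm' : (0:ℝ) < m := by exact_mod_cast hm
  have hL0 : 0 ≤ L := by positivity
  have hLB : L * B ≤ 1 := by
    rw [hL, div_mul_eq_mul_div, div_le_one (by positivity)]
    calc s * B ≤ 2 * m * B * B := by nlinarith
    _ = 2 * m * B ^ 2 := by ring
  -- Step 1: card * exp(L*s) ≤ sum of exp over all ω
  have step1 : ((Finset.univ.filter (fun ω : Fin m → Fin n => s ≤ ∑ k, g (ω k))).card : ℝ)
      * Real.exp (L * s) ≤ ∑ ω : Fin m → Fin n, Real.exp (L * ∑ k, g (ω k)) := by
    have e1 : ((Finset.univ.filter (fun ω : Fin m → Fin n => s ≤ ∑ k, g (ω k))).card : ℝ)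
        * Real.exp (L * s)
        = ∑ _ω ∈ Finset.univ.filter (fun ω : Fin m → Fin n => s ≤ ∑ k, g (ω k)),
            Real.exp (L * s) := by
      rw [Finset.sum_const, nsmul_eq_mul]
    rw [e1]
    calc ∑ ω ∈ Finset.univ.filter (fun ω : Fin m → Fin n => s ≤ ∑ k, g (ω k)),
          Real.exp (L * s)
        ≤ ∑ ω ∈ Finset.univ.filter (fun ω : Fin m → Fin n => s ≤ ∑ k, g (ω k)),
          Real.exp (L * ∑ k, g (ω k)) := by
          apply Finset.sum_le_sum
          intro ω hω
          have h := (Finset.mem_filter.1 hω).2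
          exact Real.exp_le_exp.2 (mul_le_mul_of_nonneg_left h hL0)
      _ ≤ ∑ ω : Fin m → Fin n, Real.exp (L * ∑ k, g (ω k)) := by
          apply Finset.sum_le_sum_of_subset_of_nonneg (Finset.filter_subset _ _)
          intro ω _ _
          exact (Real.exp_pos _).le
  -- Step 2: factorization
  have step2 : ∑ ω : Fin m → Fin n, Real.exp (L * ∑ k, g (ω k))
      = (∑ a, Real.exp (L * g a)) ^ m := by
    rw [Fintype.sum_pow]
    apply Finset.sum_congr rfl
    intro ω _
    rw [Finset.mul_sum, Real.exp_sum]
  -- Step 3: per-element mgf bound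
  have step3 : ∑ a, Real.exp (L * g a) ≤ (n : ℝ) * Real.exp (L ^ 2 * B ^ 2) := by
    have h1 : ∑ a, Real.exp (L * g a) ≤ ∑ a, (1 + L * g a + (L * g a) ^ 2) := by
      apply Finset.sum_le_sum
      intro a _
      apply exp_le_quad
      rw [abs_mul, abs_of_nonneg hL0]
      calc L * |g a| ≤ L * B := mul_le_mul_of_nonneg_left (hg a) hL0
        _ ≤ 1 := hLB
    have h2 : ∑ a, ((1:ℝ) + L * g a + (L * g a) ^ 2)
        = (n : ℝ) + L * ∑ a, g a + L ^ 2 * ∑ a, (g a) ^ 2 := by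
      have e : ∀ a, (1:ℝ) + L * g a + (L * g a) ^ 2 = 1 + L * g a + L ^ 2 * g a ^ 2 :=
        fun a => by ring
      simp_rw [e, Finset.sum_add_distrib, ← Finset.mul_sum, Finset.sum_const,
        Finset.card_univ, Fintype.card_fin, nsmul_eq_mul, mul_one]
    rw [hsum, mul_zero, add_zero] at h2
    have h3 : ∑ a, (g a) ^ 2 ≤ (n : ℝ) * B ^ 2 := by
      calc ∑ a, (g a) ^ 2 ≤ ∑ _a : Fin n, B ^ 2 := by
            apply Finset.sum_le_sum
            intro a _
            calc (g a) ^ 2 = |g a| ^ 2 := (sq_abs _).symm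
              _ ≤ B ^ 2 := by nlinarith [abs_nonneg (g a), hg a]
        _ = (n : ℝ) * B ^ 2 := by
            simp [Finset.sum_const, Finset.card_univ, mul_comm]
    have h4 : (1:ℝ) + L ^ 2 * B ^ 2 ≤ Real.exp (L ^ 2 * B ^ 2) := by
      have := Real.add_one_le_exp (L ^ 2 * B ^ 2)
      linarith
    calc ∑ a, Real.exp (L * g a) ≤ (n : ℝ) + L ^ 2 * ∑ a, (g a) ^ 2 := h1.trans_eq h2
      _ ≤ (n : ℝ) + L ^ 2 * ((n:ℝ) * B ^ 2) := by nlinarith [sq_nonneg L]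
      _ = (n : ℝ) * (1 + L ^ 2 * B ^ 2) := by ring
      _ ≤ (n : ℝ) * Real.exp (L ^ 2 * B ^ 2) :=
          mul_le_mul_of_nonneg_left h4 (Nat.cast_nonneg n)
  -- combine
  have hpow : (∑ a, Real.exp (L * g a)) ^ m ≤ ((n:ℝ) * Real.exp (L ^ 2 * B ^ 2)) ^ m := by
    apply pow_le_pow_left₀ _ step3
    exact Finset.sum_nonneg fun a _ => Real.exp_nonneg _
  have key : ((Finset.univ.filter (fun ω : Fin m → Fin n => s ≤ ∑ k, g (ω k))).card : ℝ)
      ≤ (n:ℝ) ^ m * Real.exp (m * (L ^ 2 * B ^ 2) - L * s) := by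
    have hexp : (0:ℝ) < Real.exp (L * s) := Real.exp_pos _
    rw [← le_div_iff₀ hexp] at step1
    calc _ ≤ (∑ ω : Fin m → Fin n, Real.exp (L * ∑ k, g (ω k))) / Real.exp (L * s) := step1
      _ = (∑ a, Real.exp (L * g a)) ^ m / Real.exp (L * s) := by rw [step2]
      _ ≤ ((n:ℝ) * Real.exp (L ^ 2 * B ^ 2)) ^ m / Real.exp (L * s) := by gcongr
      _ = (n:ℝ) ^ m * Real.exp (m * (L ^ 2 * B ^ 2) - L * s) := by
          rw [mul_pow, ← Real.exp_nat_mul, Real.exp_sub]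
          ring
  have harg : (m:ℝ) * (L ^ 2 * B ^ 2) - L * s = -s ^ 2 / (4 * m * B ^ 2) := by
    rw [hL]
    field_simp
    ring
  rwa [harg] at key

section Bounds
variable {ns r : ℕ}

lemma vecNorm_nonneg {n : ℕ} (v : Fin n → ℂ) : 0 ≤ vecNorm v := Real.sqrt_nonneg _

lemma row_le_norm2inf (A : Matrix (Fin ns) (Fin r) ℂ) (i : Fin ns) :
    vecNorm (A i) ≤ norm2inf A := by
  have : BddAbove (Set.range (fun i => vecNorm (A i))) :=
    Set.Finite.bddAbove (Set.finite_range _)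
  exact le_ciSup this i

lemma norm2inf_nonneg (hns : 1 ≤ ns) (A : Matrix (Fin ns) (Fin r) ℂ) : 0 ≤ norm2inf A :=
  le_trans (vecNorm_nonneg _) (row_le_norm2inf A ⟨0, hns⟩)

lemma frobNorm_nonneg (A : Matrix (Fin ns) (Fin r) ℂ) : 0 ≤ frobNorm A := Real.sqrt_nonneg _

lemma frobNorm_sq (A : Matrix (Fin ns) (Fin r) ℂ) :
    frobNorm A ^ 2 = ∑ i, vecNorm (A i) ^ 2 := by
  rw [frobNorm, Real.sq_sqrt (by positivity)]
  apply Finset.sum_congr rfl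
  intro i _
  rw [vecNorm, Real.sq_sqrt (by positivity)]

lemma abs_entry_mul (A B : Matrix (Fin ns) (Fin r) ℂ) (i j : Fin ns) :
    ‖(A * Bᵀ) i j‖ ≤ vecNorm (A i) * vecNorm (B j) := by
  rw [Matrix.mul_apply]
  calc ‖∑ l, A i l * Bᵀ l j‖ ≤ ∑ l, ‖A i l * Bᵀ l j‖ := by
        simpa using norm_sum_le Finset.univ (fun l => A i l * Bᵀ l j)
    _ = ∑ l, ‖A i l‖ * ‖B j l‖ := by
        simp [Matrix.transpose_apply, norm_mul]
    _ ≤ Real.sqrt (∑ l, ‖A i l‖ ^ 2) * Real.sqrt (∑ l, ‖B j l‖ ^ 2) :=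
        Real.sum_mul_le_sqrt_mul_sqrt _ _ _
    _ = vecNorm (A i) * vecNorm (B j) := rfl

/-- the skew-diagonal index set -/
def SD (ns : ℕ) (a : ℕ) : Finset (Fin ns × Fin ns) :=
  Finset.univ.filter (fun p : Fin ns × Fin ns => (p.1 : ℕ) + (p.2 : ℕ) = a)

lemma diag_sq_le₁ (A B : Matrix (Fin ns) (Fin r) ℂ) (a : ℕ) :
    ∑ p ∈ SD ns a, ‖(A * Bᵀ) p.1 p.2‖ ^ 2
      ≤ (frobNorm A * norm2inf B) ^ 2 := by
  have hB0 : ∀ j, 0 ≤ vecNorm (B j) := fun j => vecNorm_nonneg _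
  have step1 : ∑ p ∈ SD ns a, ‖(A * Bᵀ) p.1 p.2‖ ^ 2
      ≤ ∑ p ∈ SD ns a, vecNorm (A p.1) ^ 2 * norm2inf B ^ 2 := by
    apply Finset.sum_le_sum
    intro p hp
    have h1 := abs_entry_mul A B p.1 p.2
    have h2 := row_le_norm2inf B p.2
    have h3 : ‖(A * Bᵀ) p.1 p.2‖ ≤ vecNorm (A p.1) * norm2inf B := by
      calc ‖(A * Bᵀ) p.1 p.2‖ ≤ vecNorm (A p.1) * vecNorm (B p.2) := h1
        _ ≤ vecNorm (A p.1) * norm2inf B :=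
          mul_le_mul_of_nonneg_left h2 (vecNorm_nonneg _)
    calc ‖(A * Bᵀ) p.1 p.2‖ ^ 2 ≤ (vecNorm (A p.1) * norm2inf B) ^ 2 := by
          have := norm_nonneg ((A * Bᵀ) p.1 p.2)
          nlinarith
      _ = vecNorm (A p.1) ^ 2 * norm2inf B ^ 2 := by ring
  have hinj : ∀ p ∈ SD ns a, ∀ q ∈ SD ns a, p.1 = q.1 → p = q := by
    intro p hp q hq h
    have hp' := (Finset.mem_filter.1 hp).2
    have hq' := (Finset.mem_filter.1 hq).2
    have : (p.2 : ℕ) = (q.2 : ℕ) := by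
      rw [h] at hp'; omega
    exact Prod.ext h (Fin.ext this)
  have step2 : ∑ p ∈ SD ns a, vecNorm (A p.1) ^ 2 * norm2inf B ^ 2
      ≤ ∑ i : Fin ns, vecNorm (A i) ^ 2 * norm2inf B ^ 2 := by
    calc ∑ p ∈ SD ns a, vecNorm (A p.1) ^ 2 * norm2inf B ^ 2
        = ∑ i ∈ (SD ns a).image Prod.fst, vecNorm (A i) ^ 2 * norm2inf B ^ 2 :=
          (Finset.sum_image (f := fun i => vecNorm (A i) ^ 2 * norm2inf B ^ 2) hinj).symm
      _ ≤ ∑ i : Fin ns, vecNorm (A i) ^ 2 * norm2inf B ^ 2 := by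
          apply Finset.sum_le_sum_of_subset_of_nonneg (Finset.subset_univ _)
          intro i _ _
          have := vecNorm_nonneg (A i)
          positivity
  calc ∑ p ∈ SD ns a, ‖(A * Bᵀ) p.1 p.2‖ ^ 2
      ≤ ∑ i : Fin ns, vecNorm (A i) ^ 2 * norm2inf B ^ 2 := step1.trans step2
    _ = (∑ i : Fin ns, vecNorm (A i) ^ 2) * norm2inf B ^ 2 := by
        rw [Finset.sum_mul]
    _ = (frobNorm A * norm2inf B) ^ 2 := by rw [← frobNorm_sq]; ring

lemma diag_sq_le₂ (A B : Matrix (Fin ns) (Fin r) ℂ) (a : ℕ) :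
    ∑ p ∈ SD ns a, ‖(A * Bᵀ) p.1 p.2‖ ^ 2
      ≤ (norm2inf A * frobNorm B) ^ 2 := by
  have step1 : ∑ p ∈ SD ns a, ‖(A * Bᵀ) p.1 p.2‖ ^ 2
      ≤ ∑ p ∈ SD ns a, norm2inf A ^ 2 * vecNorm (B p.2) ^ 2 := by
    apply Finset.sum_le_sum
    intro p hp
    have h1 := abs_entry_mul A B p.1 p.2
    have h2 := row_le_norm2inf A p.1
    have h3 : ‖(A * Bᵀ) p.1 p.2‖ ≤ norm2inf A * vecNorm (B p.2) := by
      calc ‖(A * Bᵀ) p.1 p.2‖ ≤ vecNorm (A p.1) * vecNorm (B p.2) := h1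
        _ ≤ norm2inf A * vecNorm (B p.2) :=
          mul_le_mul_of_nonneg_right h2 (vecNorm_nonneg _)
    calc ‖(A * Bᵀ) p.1 p.2‖ ^ 2 ≤ (norm2inf A * vecNorm (B p.2)) ^ 2 := by
          have := norm_nonneg ((A * Bᵀ) p.1 p.2)
          nlinarith
      _ = norm2inf A ^ 2 * vecNorm (B p.2) ^ 2 := by ring
  have hinj : ∀ p ∈ SD ns a, ∀ q ∈ SD ns a, p.2 = q.2 → p = q := by
    intro p hp q hq h
    have hp' := (Finset.mem_filter.1 hp).2
    have hq' := (Finset.mem_filter.1 hq).2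
    have : (p.1 : ℕ) = (q.1 : ℕ) := by
      rw [h] at hp'; omega
    exact Prod.ext (Fin.ext this) h
  have step2 : ∑ p ∈ SD ns a, norm2inf A ^ 2 * vecNorm (B p.2) ^ 2
      ≤ ∑ j : Fin ns, norm2inf A ^ 2 * vecNorm (B j) ^ 2 := by
    calc ∑ p ∈ SD ns a, norm2inf A ^ 2 * vecNorm (B p.2) ^ 2
        = ∑ j ∈ (SD ns a).image Prod.snd, norm2inf A ^ 2 * vecNorm (B j) ^ 2 :=
          (Finset.sum_image (f := fun j => norm2inf A ^ 2 * vecNorm (B j) ^ 2) hinj).symm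
      _ ≤ ∑ j : Fin ns, norm2inf A ^ 2 * vecNorm (B j) ^ 2 := by
          apply Finset.sum_le_sum_of_subset_of_nonneg (Finset.subset_univ _)
          intro j _ _
          have := vecNorm_nonneg (B j)
          positivity
  calc ∑ p ∈ SD ns a, ‖(A * Bᵀ) p.1 p.2‖ ^ 2
      ≤ ∑ j : Fin ns, norm2inf A ^ 2 * vecNorm (B j) ^ 2 := step1.trans step2
    _ = norm2inf A ^ 2 * ∑ j : Fin ns, vecNorm (B j) ^ 2 := by
        rw [Finset.mul_sum]
    _ = (norm2inf A * frobNorm B) ^ 2 := by rw [← frobNorm_sq]; ring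

/-- Core bound for sums along the skew diagonal. -/
lemma core_diag_bound (hns : 1 ≤ ns) (A B : Matrix (Fin ns) (Fin r) ℂ) (a : ℕ) :
    (1 / Real.sqrt (hw ns a)) * ∑ p ∈ SD ns a, ‖(A * Bᵀ) p.1 p.2‖
      ≤ min (frobNorm A * norm2inf B) (norm2inf A * frobNorm B) := by
  rcases Nat.eq_zero_or_pos (hw ns a) with h0 | hpos
  · have hempty : SD ns a = ∅ := Finset.card_eq_zero.1 h0
    rw [hempty]
    simp only [Finset.sum_empty, mul_zero]
    apply le_min
    · exact mul_nonneg (frobNorm_nonneg A) (norm2inf_nonneg hns B)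
    · exact mul_nonneg (norm2inf_nonneg hns A) (frobNorm_nonneg B)
  · have hcard : (SD ns a).card = hw ns a := rfl
    have hw0 : (0:ℝ) < Real.sqrt (hw ns a) := Real.sqrt_pos.2 (by exact_mod_cast hpos)
    have cs : ∑ p ∈ SD ns a, ‖(A * Bᵀ) p.1 p.2‖
        ≤ Real.sqrt (hw ns a) * Real.sqrt (∑ p ∈ SD ns a, ‖(A * Bᵀ) p.1 p.2‖ ^ 2) := by
      have := Real.sum_mul_le_sqrt_mul_sqrt (SD ns a) (fun _ => (1:ℝ))
        (fun p => ‖(A * Bᵀ) p.1 p.2‖)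
      simpa [hcard] using this
    have hsq : Real.sqrt (∑ p ∈ SD ns a, ‖(A * Bᵀ) p.1 p.2‖ ^ 2)
        ≤ min (frobNorm A * norm2inf B) (norm2inf A * frobNorm B) := by
      apply le_min
      · calc _ ≤ Real.sqrt ((frobNorm A * norm2inf B) ^ 2) :=
              Real.sqrt_le_sqrt (diag_sq_le₁ A B a)
          _ = frobNorm A * norm2inf B :=
              Real.sqrt_sq (mul_nonneg (frobNorm_nonneg A) (norm2inf_nonneg hns B))
      · calc _ ≤ Real.sqrt ((norm2inf A * frobNorm B) ^ 2) :=
              Real.sqrt_le_sqrt (diag_sq_le₂ A B a)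
          _ = norm2inf A * frobNorm B :=
              Real.sqrt_sq (mul_nonneg (norm2inf_nonneg hns A) (frobNorm_nonneg B))
    calc (1 / Real.sqrt (hw ns a)) * ∑ p ∈ SD ns a, ‖(A * Bᵀ) p.1 p.2‖
        ≤ (1 / Real.sqrt (hw ns a)) * (Real.sqrt (hw ns a)
            * Real.sqrt (∑ p ∈ SD ns a, ‖(A * Bᵀ) p.1 p.2‖ ^ 2)) :=
          mul_le_mul_of_nonneg_left cs (by positivity)
      _ = Real.sqrt (∑ p ∈ SD ns a, ‖(A * Bᵀ) p.1 p.2‖ ^ 2) := by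
          field_simp
      _ ≤ _ := hsq

end Bounds

section Inner
variable {ns r : ℕ}

lemma innerM_expand (X Y : Matrix (Fin ns) (Fin ns) ℂ) :
    innerM X Y = ∑ p : Fin ns × Fin ns, (starRingEnd ℂ) (X p.1 p.2) * Y p.1 p.2 := by
  rw [Fintype.sum_prod_type]
  rw [innerM, Matrix.trace]
  simp only [Matrix.diag, Matrix.mul_apply, Matrix.conjTranspose_apply]
  rw [Finset.sum_comm]
  rfl

lemma innerM_hankel_right (M : Matrix (Fin ns) (Fin ns) ℂ) (a : ℕ) :
    innerM M (hankelBasis ns a)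
      = ∑ p ∈ SD ns a, (starRingEnd ℂ) (M p.1 p.2) * ((1 / Real.sqrt (hw ns a) : ℝ) : ℂ) := by
  rw [innerM_expand, SD, Finset.sum_filter]
  apply Finset.sum_congr rfl
  intro p _
  by_cases h : (p.1 : ℕ) + (p.2 : ℕ) = a <;> simp [hankelBasis, h]

lemma innerM_hankel_left (M : Matrix (Fin ns) (Fin ns) ℂ) (a : ℕ) :
    innerM (hankelBasis ns a) M
      = ∑ p ∈ SD ns a, ((1 / Real.sqrt (hw ns a) : ℝ) : ℂ) * M p.1 p.2 := by
  rw [innerM_expand, SD, Finset.sum_filter]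
  apply Finset.sum_congr rfl
  intro p _
  by_cases h : (p.1 : ℕ) + (p.2 : ℕ) = a <;> simp [hankelBasis, h]

lemma abs_innerM_hankel_right (hns : 1 ≤ ns) (A B : Matrix (Fin ns) (Fin r) ℂ) (a : ℕ) :
    ‖innerM (A * Bᵀ) (hankelBasis ns a)‖
      ≤ min (frobNorm A * norm2inf B) (norm2inf A * frobNorm B) := by
  rw [innerM_hankel_right]
  refine le_trans ?_ (core_diag_bound hns A B a)
  calc ‖∑ p ∈ SD ns a,
        (starRingEnd ℂ) ((A * Bᵀ) p.1 p.2) * ((1 / Real.sqrt (hw ns a) : ℝ) : ℂ)‖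
      ≤ ∑ p ∈ SD ns a, 
        ‖(starRingEnd ℂ) ((A * Bᵀ) p.1 p.2) * ((1 / Real.sqrt (hw ns a) : ℝ) : ℂ)‖ :=
        norm_sum_le _ _
    _ = ∑ p ∈ SD ns a, ‖(A * Bᵀ) p.1 p.2‖ * (1 / Real.sqrt (hw ns a)) := by
        apply Finset.sum_congr rfl
        intro p _
        rw [norm_mul, Complex.norm_conj, Complex.norm_real, Real.norm_of_nonneg (by positivity)]
    _ = (1 / Real.sqrt (hw ns a)) * ∑ p ∈ SD ns a, ‖(A * Bᵀ) p.1 p.2‖ := by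
        rw [Finset.mul_sum]
        apply Finset.sum_congr rfl
        intro p _
        ring

lemma abs_innerM_hankel_left (hns : 1 ≤ ns) (C D : Matrix (Fin ns) (Fin r) ℂ) (a : ℕ) :
    ‖innerM (hankelBasis ns a) (C * Dᵀ)‖
      ≤ min (frobNorm C * norm2inf D) (norm2inf C * frobNorm D) := by
  rw [innerM_hankel_left]
  refine le_trans ?_ (core_diag_bound hns C D a)
  calc ‖∑ p ∈ SD ns a,
        ((1 / Real.sqrt (hw ns a) : ℝ) : ℂ) * (C * Dᵀ) p.1 p.2‖
      ≤ ∑ p ∈ SD ns a, 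
        ‖((1 / Real.sqrt (hw ns a) : ℝ) : ℂ) * (C * Dᵀ) p.1 p.2‖ :=
        norm_sum_le _ _
    _ = ∑ p ∈ SD ns a, (1 / Real.sqrt (hw ns a)) * ‖(C * Dᵀ) p.1 p.2‖ := by
        apply Finset.sum_congr rfl
        intro p _
        rw [norm_mul, Complex.norm_real, Real.norm_of_nonneg (by positivity)]
    _ = (1 / Real.sqrt (hw ns a)) * ∑ p ∈ SD ns a, ‖(C * Dᵀ) p.1 p.2‖ := by
        rw [Finset.mul_sum]

end Inner

/-- Main probabilistic estimate. -/
lemma main_prob (n m : ℕ) (hm0 : 0 < m) (hn2 : 2 ≤ n) (X : ℕ → ℂ) (b : ℝ) (hb : 0 < b)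
    (hXb : ∀ a : ℕ, ‖X a‖ ≤ b)
    (hmlog : 4 * Real.log n ≤ m) (t : ℝ)
    (ht : 16 * (n:ℝ) * Real.sqrt ((m:ℝ) * Real.log n) / m * b ≤ t) :
    ((Finset.univ.filter (fun ω : Fin m → Fin n =>
        ‖((n:ℂ)/(m:ℂ)) * (∑ k : Fin m, X ↑(ω k)) - ∑ a : Fin n, X ↑a‖ ≤ t)).card : ℝ)
      ≥ (1 - ((n : ℝ) ^ (2:ℕ))⁻¹) * Fintype.card (Fin m → Fin n) := by
  have hn0 : 0 < n := by omega
  have hnR : (0:ℝ) < n := by exact_mod_cast hn0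
  have hn2R : (2:ℝ) ≤ n := by exact_mod_cast hn2
  have hmR : (0:ℝ) < m := by exact_mod_cast hm0
  have hlog : 0 < Real.log n := Real.log_pos (by exact_mod_cast (by omega : 1 < n))
  have hnC : (n:ℂ) ≠ 0 := Nat.cast_ne_zero.2 (by omega)
  have hmC : (m:ℂ) ≠ 0 := Nat.cast_ne_zero.2 (by omega)
  set T : ℂ := ∑ a : Fin n, X ↑a with hT
  set Y : Fin n → ℂ := fun a => X ↑a - T / n with hY
  -- bounds on Y
  have hTb : ‖T‖ ≤ n * b := by
    calc ‖T‖ ≤ ∑ a : Fin n, ‖X ↑a‖ := norm_sum_le _ _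
      _ ≤ ∑ _a : Fin n, b := Finset.sum_le_sum fun a _ => hXb _
      _ = n * b := by simp [mul_comm]
  have hYb : ∀ a : Fin n, ‖Y a‖ ≤ 2 * b := by
    intro a
    have h1 : ‖T / n‖ ≤ b := by
      rw [norm_div, Complex.norm_natCast, div_le_iff₀ hnR]
      linarith [hTb]
    calc ‖Y a‖ ≤ ‖X ↑a‖ + ‖T / n‖ := by
          rw [hY]
          simpa [sub_eq_add_neg] using norm_add_le (X ↑a) (-(T / (n:ℂ)))
      _ ≤ b + b := add_le_add (hXb _) h1
      _ = 2 * b := by ring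
  have hYsum : ∑ a : Fin n, Y a = 0 := by
    rw [hY]
    rw [Finset.sum_sub_distrib, ← hT, Finset.sum_const, Finset.card_univ, Fintype.card_fin,
      nsmul_eq_mul]
    field_simp
    ring
  -- the deviation threshold
  set s : ℝ := 8 * b * Real.sqrt ((m:ℝ) * Real.log n) with hs
  have hsqrtpos : 0 < Real.sqrt ((m:ℝ) * Real.log n) := Real.sqrt_pos.2 (by positivity)
  have hs0 : 0 ≤ s := by positivity
  have hsB : s ≤ 2 * m * (2 * b) := by
    have hL4 : Real.log n ≤ (m:ℝ) / 4 := by linarith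
    have h2 : (m:ℝ) * Real.log n ≤ ((m:ℝ)/2)^2 := by nlinarith
    have h1 : Real.sqrt ((m:ℝ) * Real.log n) ≤ (m:ℝ) / 2 :=
      (Real.sqrt_le_sqrt h2).trans_eq (Real.sqrt_sq (by positivity))
    nlinarith
  have hbB : (0:ℝ) < 2 * b := by linarith
  -- the four one-sided deviations
  set g1 : Fin n → ℝ := fun a => (Y a).re with hg1def
  set g2 : Fin n → ℝ := fun a => -(Y a).re with hg2def
  set g3 : Fin n → ℝ := fun a => (Y a).im with hg3def
  set g4 : Fin n → ℝ := fun a => -(Y a).im with hg4def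
  have hgb1 : ∀ a, |g1 a| ≤ 2 * b := fun a => (Complex.abs_re_le_norm _).trans (hYb a)
  have hgb2 : ∀ a, |g2 a| ≤ 2 * b := fun a => by
    rw [hg2def]; rw [abs_neg]; exact (Complex.abs_re_le_norm _).trans (hYb a)
  have hgb3 : ∀ a, |g3 a| ≤ 2 * b := fun a => (Complex.abs_im_le_norm _).trans (hYb a)
  have hgb4 : ∀ a, |g4 a| ≤ 2 * b := fun a => by
    rw [hg4def]; rw [abs_neg]; exact (Complex.abs_im_le_norm _).trans (hYb a)
  have hsum1 : ∑ a, g1 a = 0 := by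
    rw [hg1def, ← Complex.re_sum, hYsum, Complex.zero_re]
  have hsum2 : ∑ a, g2 a = 0 := by
    rw [hg2def]; simp only [Finset.sum_neg_distrib]
    rw [← Complex.re_sum, hYsum, Complex.zero_re, neg_zero]
  have hsum3 : ∑ a, g3 a = 0 := by
    rw [hg3def, ← Complex.im_sum, hYsum, Complex.zero_im]
  have hsum4 : ∑ a, g4 a = 0 := by
    rw [hg4def]; simp only [Finset.sum_neg_distrib]
    rw [← Complex.im_sum, hYsum, Complex.zero_im, neg_zero]
  have C1 := chernoff_count n m hm0 g1 (2*b) hbB hgb1 hsum1 s hs0 hsB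
  have C2 := chernoff_count n m hm0 g2 (2*b) hbB hgb2 hsum2 s hs0 hsB
  have C3 := chernoff_count n m hm0 g3 (2*b) hbB hgb3 hsum3 s hs0 hsB
  have C4 := chernoff_count n m hm0 g4 (2*b) hbB hgb4 hsum4 s hs0 hsB
  -- evaluate the exponential
  have hss : Real.sqrt ((m:ℝ) * Real.log n) ^ 2 = (m:ℝ) * Real.log n :=
    Real.sq_sqrt (by positivity)
  have hE : -s^2/(4*m*(2*b)^2) = -(4 * Real.log n) := by
    have h1 : s^2 = 64 * b^2 * ((m:ℝ) * Real.log n) := by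
      rw [hs, mul_pow, mul_pow, hss]; ring
    rw [h1]
    field_simp
    ring
  have hexp : Real.exp (-(4 * Real.log n)) = ((n:ℝ)^4)⁻¹ := by
    rw [Real.exp_neg]
    congr 1
    rw [show (4:ℝ) * Real.log n = ((4:ℕ):ℝ) * Real.log n by norm_num, ← Real.log_pow,
      Real.exp_log (by positivity)]
  rw [hE, hexp] at C1 C2 C3 C4
  -- the bad sets
  set S1 := Finset.univ.filter (fun ω : Fin m → Fin n => s ≤ ∑ k, g1 (ω k)) with hS1
  set S2 := Finset.univ.filter (fun ω : Fin m → Fin n => s ≤ ∑ k, g2 (ω k)) with hS2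
  set S3 := Finset.univ.filter (fun ω : Fin m → Fin n => s ≤ ∑ k, g3 (ω k)) with hS3
  set S4 := Finset.univ.filter (fun ω : Fin m → Fin n => s ≤ ∑ k, g4 (ω k)) with hS4
  -- good events
  have claim : ∀ ω : Fin m → Fin n, ω ∉ S1 → ω ∉ S2 → ω ∉ S3 → ω ∉ S4 →
      ‖((n:ℂ)/(m:ℂ)) * (∑ k : Fin m, X ↑(ω k)) - T‖ ≤ t := by
    intro ω h1 h2 h3 h4
    have h1' : ∑ k, g1 (ω k) < s :=
      not_le.1 fun h => h1 (by rw [hS1]; exact Finset.mem_filter.2 ⟨Finset.mem_univ _, h⟩)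
    have h2' : ∑ k, g2 (ω k) < s :=
      not_le.1 fun h => h2 (by rw [hS2]; exact Finset.mem_filter.2 ⟨Finset.mem_univ _, h⟩)
    have h3' : ∑ k, g3 (ω k) < s :=
      not_le.1 fun h => h3 (by rw [hS3]; exact Finset.mem_filter.2 ⟨Finset.mem_univ _, h⟩)
    have h4' : ∑ k, g4 (ω k) < s :=
      not_le.1 fun h => h4 (by rw [hS4]; exact Finset.mem_filter.2 ⟨Finset.mem_univ _, h⟩)
    have hre : |∑ k, (Y (ω k)).re| ≤ s := by
      rw [hg1def] at h1'
      rw [hg2def] at h2'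
      simp only [Finset.sum_neg_distrib] at h2'
      exact abs_le.2 ⟨by linarith, le_of_lt h1'⟩
    have him : |∑ k, (Y (ω k)).im| ≤ s := by
      rw [hg3def] at h3'
      rw [hg4def] at h4'
      simp only [Finset.sum_neg_distrib] at h4'
      exact abs_le.2 ⟨by linarith, le_of_lt h3'⟩
    have hsumY : ∑ k, Y (ω k) = (∑ k, X ↑(ω k)) - (m:ℂ) * (T / n) := by
      rw [hY]
      rw [Finset.sum_sub_distrib, Finset.sum_const, Finset.card_univ, Fintype.card_fin,
        nsmul_eq_mul]
    have hexpr : ((n:ℂ)/(m:ℂ)) * (∑ k, X ↑(ω k)) - T = ((n:ℂ)/(m:ℂ)) * ∑ k, Y (ω k) := by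
      rw [hsumY]
      field_simp
    rw [hexpr]
    have habs : ‖((n:ℂ)/(m:ℂ)) * ∑ k, Y (ω k)‖
        = ((n:ℝ)/(m:ℝ)) * ‖∑ k, Y (ω k)‖ := by
      rw [norm_mul, norm_div, Complex.norm_natCast, Complex.norm_natCast]
    rw [habs]
    have h5 : ‖∑ k, Y (ω k)‖ ≤ 2 * s := by
      calc ‖∑ k, Y (ω k)‖ ≤ |(∑ k, Y (ω k)).re| + |(∑ k, Y (ω k)).im| :=
            Complex.norm_le_abs_re_add_abs_im _
        _ = |∑ k, (Y (ω k)).re| + |∑ k, (Y (ω k)).im| := by rw [Complex.re_sum, Complex.im_sum]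
        _ ≤ s + s := add_le_add hre him
        _ = 2 * s := by ring
    calc ((n:ℝ)/(m:ℝ)) * ‖∑ k, Y (ω k)‖ ≤ ((n:ℝ)/(m:ℝ)) * (2 * s) :=
          mul_le_mul_of_nonneg_left h5 (by positivity)
      _ = 16 * (n:ℝ) * Real.sqrt ((m:ℝ) * Real.log n) / m * b := by
          rw [hs]; field_simp; ring
      _ ≤ t := ht
  -- counting
  set G := Finset.univ.filter (fun ω : Fin m → Fin n =>
      ‖((n:ℂ)/(m:ℂ)) * (∑ k : Fin m, X ↑(ω k)) - T‖ ≤ t) with hG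
  set U := S1 ∪ S2 ∪ S3 ∪ S4 with hU
  have hGsup : Finset.univ \ U ⊆ G := by
    intro ω hω
    rw [Finset.mem_sdiff] at hω
    have hωU := hω.2
    rw [hU] at hωU
    simp only [Finset.mem_union, not_or] at hωU
    rw [hG]
    exact Finset.mem_filter.2 ⟨Finset.mem_univ _,
      claim ω hωU.1.1.1 hωU.1.1.2 hωU.1.2 hωU.2⟩
  have hcard1 : ((Finset.univ \ U).card : ℝ) ≤ G.card := by
    exact_mod_cast Finset.card_le_card hGsup
  have hcard2 : (Finset.univ \ U).card
      = (Finset.univ : Finset (Fin m → Fin n)).card - U.card :=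
    Finset.card_sdiff_of_subset (Finset.subset_univ _)
  have hUle : U.card ≤ S1.card + S2.card + S3.card + S4.card := by
    calc U.card ≤ (S1 ∪ S2 ∪ S3).card + S4.card := Finset.card_union_le _ _
      _ ≤ (S1 ∪ S2).card + S3.card + S4.card := by
          have := Finset.card_union_le (S1 ∪ S2) S3
          omega
      _ ≤ S1.card + S2.card + S3.card + S4.card := by
          have := Finset.card_union_le S1 S2
          omega
  have hUuniv : U.card ≤ (Finset.univ : Finset (Fin m → Fin n)).card :=
    Finset.card_le_card (Finset.subset_univ _)
  have huniv : ((Finset.univ : Finset (Fin m → Fin n)).card : ℝ) = (n:ℝ)^m := by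
    rw [Finset.card_univ, Fintype.card_fun]
    push_cast
    simp
  have hUR : (U.card : ℝ) ≤ 4 * ((n:ℝ)^m * ((n:ℝ)^4)⁻¹) := by
    have : (U.card : ℝ) ≤ (S1.card : ℝ) + S2.card + S3.card + S4.card := by
      exact_mod_cast hUle
    linarith [C1, C2, C3, C4]
  have hfc : (Fintype.card (Fin m → Fin n) : ℝ) = (n:ℝ)^m := by
    rw [Fintype.card_fun]
    push_cast
    simp
  have hfinal : (1 - ((n : ℝ) ^ (2:ℕ))⁻¹) * (n:ℝ)^m
      ≤ (n:ℝ)^m - 4 * ((n:ℝ)^m * ((n:ℝ)^4)⁻¹) := by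
    have hnm : (0:ℝ) < (n:ℝ)^m := by positivity
    have h4 : 4 * ((n:ℝ)^4)⁻¹ ≤ ((n:ℝ)^(2:ℕ))⁻¹ := by
      rw [show ((n:ℝ)^4) = (n:ℝ)^(2:ℕ) * (n:ℝ)^(2:ℕ) by ring]
      rw [mul_inv]
      have h2 : ((n:ℝ)^(2:ℕ))⁻¹ ≤ 4⁻¹ := by
        rw [inv_le_inv₀ (by positivity) (by norm_num)]
        nlinarith
      nlinarith [inv_nonneg.2 (le_of_lt (show (0:ℝ) < (n:ℝ)^(2:ℕ) by positivity))]
    nlinarith [inv_nonneg.2 (le_of_lt (show (0:ℝ) < (n:ℝ)^(2:ℕ) by positivity))]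
  calc (G.card : ℝ) ≥ ((Finset.univ \ U).card : ℝ) := hcard1
    _ = ((Finset.univ : Finset (Fin m → Fin n)).card : ℝ) - U.card := by
        rw [hcard2, Nat.cast_sub hUuniv]
    _ ≥ (n:ℝ)^m - 4 * ((n:ℝ)^m * ((n:ℝ)^4)⁻¹) := by
        rw [huniv]; linarith
    _ ≥ (1 - ((n : ℝ) ^ (2:ℕ))⁻¹) * (n:ℝ)^m := hfinal
    _ = (1 - ((n : ℝ) ^ (2:ℕ))⁻¹) * Fintype.card (Fin m → Fin n) := by rw [hfc]

/-- Lemma 8 (Hankel sampling concentration), with i.i.d. uniform sampling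
expressed by counting uniform tuples `ω : Fin m → Fin n`. -/
theorem hankel_sampling_concentration :
    ∃ c₄ c₅ : ℝ, 0 < c₄ ∧ 0 < c₅ ∧
      ∀ ns r n : ℕ, 1 ≤ ns → 1 ≤ r → n = 2 * ns - 1 →
      ∀ m : ℕ, c₅ * Real.log n ≤ m →
      ∀ A B C D : Matrix (Fin ns) (Fin r) ℂ,
      ((Finset.univ.filter (fun ω : Fin m → Fin n =>
          ‖(((n : ℂ) / (m : ℂ))
                * ∑ k : Fin m, innerM (A * Bᵀ) (hankelBasis ns (ω k))
                    * innerM (hankelBasis ns (ω k)) (C * Dᵀ)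
              - ∑ a : Fin n, innerM (A * Bᵀ) (hankelBasis ns a)
                    * innerM (hankelBasis ns a) (C * Dᵀ))‖
            ≤ c₄ * Real.sqrt ((n : ℝ) ^ 2 * Real.log n / m)
                * min (frobNorm A * norm2inf B) (norm2inf A * frobNorm B)
                * min (frobNorm C * norm2inf D) (norm2inf C * frobNorm D))).card : ℝ)
        ≥ (1 - ((n : ℝ) ^ (2 : ℕ))⁻¹) * Fintype.card (Fin m → Fin n) := by
  refine ⟨16, 4, by norm_num, by norm_num, ?_⟩
  intro ns r n hns hr hn m hm A B C D
  have hα0 : 0 ≤ min (frobNorm A * norm2inf B) (norm2inf A * frobNorm B) :=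
    le_min (mul_nonneg (frobNorm_nonneg A) (norm2inf_nonneg hns B))
      (mul_nonneg (norm2inf_nonneg hns A) (frobNorm_nonneg B))
  have hβ0 : 0 ≤ min (frobNorm C * norm2inf D) (norm2inf C * frobNorm D) :=
    le_min (mul_nonneg (frobNorm_nonneg C) (norm2inf_nonneg hns D))
      (mul_nonneg (norm2inf_nonneg hns C) (frobNorm_nonneg D))
  have hn1 : 1 ≤ n := by omega
  rcases lt_or_ge n 2 with hn2 | hn2
  · -- the case n = 1 is trivial
    have hone : n = 1 := by omega
    subst hone
    norm_num
  · -- main case n ≥ 2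
    have hnR : (0:ℝ) < n := by
      have : 0 < n := by omega
      exact_mod_cast this
    have hlog : 0 < Real.log n := Real.log_pos (by exact_mod_cast (by omega : 1 < n))
    have hm0 : 0 < m := by
      rcases Nat.eq_zero_or_pos m with h0 | h
      · exfalso
        rw [h0] at hm
        push_cast at hm
        nlinarith
      · exact h
    have hmR : (0:ℝ) < m := by exact_mod_cast hm0
    have key : ∀ a : ℕ, ‖innerM (A * Bᵀ) (hankelBasis ns a)
        * innerM (hankelBasis ns a) (C * Dᵀ)‖
        ≤ (min (frobNorm A * norm2inf B) (norm2inf A * frobNorm B))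
          * (min (frobNorm C * norm2inf D) (norm2inf C * frobNorm D)) := by
      intro a
      rw [norm_mul]
      exact mul_le_mul (abs_innerM_hankel_right hns A B a) (abs_innerM_hankel_left hns C D a)
        (norm_nonneg _) hα0
    rcases eq_or_lt_of_le (mul_nonneg hα0 hβ0) with hb0 | hb
    · -- degenerate case: one of the norms vanishes
      have hX0 : ∀ a : ℕ, innerM (A * Bᵀ) (hankelBasis ns a)
          * innerM (hankelBasis ns a) (C * Dᵀ) = 0 := by
        intro a
        have h := key a
        rw [← hb0] at h
        exact norm_eq_zero.1 (le_antisymm h (norm_nonneg _))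
      have hall : (Finset.univ.filter (fun ω : Fin m → Fin n =>
          ‖(((n : ℂ) / (m : ℂ))
                * ∑ k : Fin m, innerM (A * Bᵀ) (hankelBasis ns (ω k))
                    * innerM (hankelBasis ns (ω k)) (C * Dᵀ)
              - ∑ a : Fin n, innerM (A * Bᵀ) (hankelBasis ns a)
                    * innerM (hankelBasis ns a) (C * Dᵀ))‖
            ≤ 16 * Real.sqrt ((n : ℝ) ^ 2 * Real.log n / m)
                * min (frobNorm A * norm2inf B) (norm2inf A * frobNorm B)
                * min (frobNorm C * norm2inf D) (norm2inf C * frobNorm D)))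
          = Finset.univ := by
        apply Finset.filter_true_of_mem
        intro ω _
        simp only [hX0, Finset.sum_const_zero, mul_zero, sub_zero, norm_zero]
        have h16 : (0:ℝ) ≤ 16 * Real.sqrt ((n:ℝ)^2 * Real.log n / m) := by positivity
        exact mul_nonneg (mul_nonneg h16 hα0) hβ0
      rw [hall, Finset.card_univ]
      have hN : (0:ℝ) ≤ (Fintype.card (Fin m → Fin n) : ℝ) := by positivity
      have hx : (0:ℝ) ≤ ((n:ℝ)^(2:ℕ))⁻¹ := by positivity
      nlinarith
    · -- nondegenerate case: apply the probabilistic estimate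
      have hsqrt : Real.sqrt ((n:ℝ)^2 * Real.log n / m)
          = (n:ℝ) * Real.sqrt ((m:ℝ) * Real.log n) / m := by
        rw [show (n:ℝ)^2 * Real.log n / m = ((n:ℝ) * Real.sqrt ((m:ℝ) * Real.log n) / m)^2 by
          rw [div_pow, mul_pow, Real.sq_sqrt (by positivity)]
          field_simp]
        exact Real.sqrt_sq (by positivity)
      have ht : 16 * (n:ℝ) * Real.sqrt ((m:ℝ) * Real.log n) / m
            * ((min (frobNorm A * norm2inf B) (norm2inf A * frobNorm B))
              * (min (frobNorm C * norm2inf D) (norm2inf C * frobNorm D)))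
          ≤ 16 * Real.sqrt ((n : ℝ) ^ 2 * Real.log n / m)
              * min (frobNorm A * norm2inf B) (norm2inf A * frobNorm B)
              * min (frobNorm C * norm2inf D) (norm2inf C * frobNorm D) := by
        rw [hsqrt]
        apply le_of_eq
        ring
      exact main_prob n m hm0 hn2
        (fun a : ℕ => innerM (A * Bᵀ) (hankelBasis ns a) * innerM (hankelBasis ns a) (C * Dᵀ))
        ((min (frobNorm A * norm2inf B) (norm2inf A * frobNorm B))
          * (min (frobNorm C * norm2inf D) (norm2inf C * frobNorm D)))
        hb key hm _ ht
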